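/- Let A be the n×n tridiagonal matrix with diagonal (1,2,...,2,1) and off-diagonals -1, and let à be the mn×mn block tridiagonal matrix with diagonal blocks (A+I_n, A+2I_n, ..., A+2I_n, A+I_n) and off-diagonal blocks -I_n. Then det(à - a·I_{mn}) = ∏_{γ=1}^m det(A + (a_m^γ - a) I_n), where a_m^γ = 2(1 - cos((γ-1)π/m)). Consequently det(à - a·I) = (-1)^{mn} ∏_{γ=1}^m ∏_{α=1}^n (a - (a_m^γ + a_n^α)) with a_n^α = 2(1 - cos((α-1)π/n)). -/

import Mathlib

open Real Matrix Finset Kronecker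

noncomputable def chainA (N : ℕ) : Matrix (Fin N) (Fin N) ℝ :=
  Matrix.of fun i j =>
    if (i : ℕ) = (j : ℕ) then (if (i : ℕ) = 0 ∨ (i : ℕ) = N - 1 then 1 else 2)
    else if (i : ℕ) + 1 = (j : ℕ) ∨ (j : ℕ) + 1 = (i : ℕ) then -1 else 0

noncomputable def blockA (m n : ℕ) : Matrix (Fin m × Fin n) (Fin m × Fin n) ℝ :=
  Matrix.of fun p q =>
    if (p.1 : ℕ) = (q.1 : ℕ) then
      chainA n p.2 q.2 +
        (if (p.1 : ℕ) = 0 ∨ (p.1 : ℕ) = m - 1 then 1 else 2) *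
          (if p.2 = q.2 then 1 else 0)
    else if (p.1 : ℕ) + 1 = (q.1 : ℕ) ∨ (q.1 : ℕ) + 1 = (p.1 : ℕ) then
      (if p.2 = q.2 then -1 else 0)
    else 0

/-! ### Auxiliary definitions -/

/-- The eigenvalues of `chainA m`. -/
noncomputable def lamE (m γ : ℕ) : ℝ := 2 * (1 - Real.cos (γ * Real.pi / m))

/-- Entries of `chainA` as a function on `ℕ`. -/
noncomputable def entE (m j k : ℕ) : ℝ :=
  if j = k then (if j = 0 ∨ j = m - 1 then 1 else 2)
  else if j + 1 = k ∨ k + 1 = j then -1 else 0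

/-- The (unnormalized) eigenvector matrix of `chainA m` (discrete cosine transform). -/
noncomputable def evP (m : ℕ) : Matrix (Fin m) (Fin m) ℝ :=
  Matrix.of fun j γ => Real.cos ((2 * ((j:ℕ):ℝ) + 1) * (((γ:ℕ):ℝ) * Real.pi / (2 * (m:ℝ))))

/-! ### Scalar trigonometric lemmas -/

lemma cos_rec (x y : ℝ) : Real.cos (x - y) + Real.cos (x + y) = 2 * Real.cos y * Real.cos x := by
  rw [Real.cos_sub, Real.cos_add]; ring

lemma telesc (ψ : ℝ) (m : ℕ) :
    2 * Real.sin ψ * ∑ j ∈ Finset.range m, Real.cos ((2 * j + 1) * ψ) =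
      Real.sin (2 * m * ψ) := by
  rw [Finset.mul_sum]
  have key : ∀ j : ℕ, 2 * Real.sin ψ * Real.cos ((2 * j + 1) * ψ) =
      (fun j : ℕ => Real.sin (2 * j * ψ)) (j + 1) - (fun j : ℕ => Real.sin (2 * j * ψ)) j := by
    intro j
    simp only
    have h1 : (2 * ((j:ℝ) + 1)) * ψ = (2 * (j:ℝ) + 1) * ψ + ψ := by ring
    have h2 : (2 * (j:ℝ)) * ψ = (2 * (j:ℝ) + 1) * ψ - ψ := by ring
    push_cast
    rw [h1, h2, Real.sin_add, Real.sin_sub]; ring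
  rw [Finset.sum_congr rfl (fun j _ => key j)]
  simpa using Finset.sum_range_sub (fun j : ℕ => Real.sin (2 * j * ψ)) m

lemma sum_cos_zero (m k : ℕ) (hm : 2 ≤ m) (hk0 : 0 < k) (hk : k < 2 * m) :
    ∑ j ∈ Finset.range m, Real.cos ((2 * j + 1) * ((k:ℝ) * Real.pi / (2 * m))) = 0 := by
  have hm0 : (0:ℝ) < m := by positivity
  have h := telesc ((k:ℝ) * Real.pi / (2 * m)) m
  rw [show 2 * (m:ℝ) * ((k:ℝ) * Real.pi / (2 * m)) = k * Real.pi by field_simp,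
    Real.sin_nat_mul_pi] at h
  have hs : 0 < Real.sin ((k:ℝ) * Real.pi / (2 * m)) := by
    apply Real.sin_pos_of_pos_of_lt_pi
    · have := Real.pi_pos; positivity
    · rw [div_lt_iff₀ (by positivity)]
      have hkr : (k:ℝ) < 2 * m := by exact_mod_cast hk
      nlinarith [Real.pi_pos]
  rcases mul_eq_zero.mp h with h' | h'
  · exact absurd h' (by positivity)
  · exact h'

lemma sum_cos_cos (m γ γ' : ℕ) (hm : 2 ≤ m) (hγ : γ < m) (hγ' : γ' < m) (h : γ' ≤ γ) :
    (∑ j ∈ Finset.range m, Real.cos ((2 * j + 1) * ((γ:ℝ) * Real.pi / (2 * m))) *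
        Real.cos ((2 * j + 1) * ((γ':ℝ) * Real.pi / (2 * m)))) =
      if γ = γ' then (if γ = 0 then (m:ℝ) else m / 2) else 0 := by
  have key : ∀ j : ℕ, Real.cos ((2 * j + 1) * ((γ:ℝ) * Real.pi / (2 * m))) *
      Real.cos ((2 * j + 1) * ((γ':ℝ) * Real.pi / (2 * m))) =
      (Real.cos ((2 * j + 1) * ((((γ - γ' : ℕ)):ℝ) * Real.pi / (2 * m)))
        + Real.cos ((2 * j + 1) * ((((γ + γ' : ℕ)):ℝ) * Real.pi / (2 * m)))) / 2 := by
    intro j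
    have e1 : (2 * (j:ℝ) + 1) * ((((γ - γ' : ℕ)):ℝ) * Real.pi / (2 * m)) =
        (2 * (j:ℝ) + 1) * ((γ:ℝ) * Real.pi / (2 * m))
          - (2 * (j:ℝ) + 1) * ((γ':ℝ) * Real.pi / (2 * m)) := by
      push_cast [Nat.cast_sub h]; ring
    have e2 : (2 * (j:ℝ) + 1) * ((((γ + γ' : ℕ)):ℝ) * Real.pi / (2 * m)) =
        (2 * (j:ℝ) + 1) * ((γ:ℝ) * Real.pi / (2 * m))
          + (2 * (j:ℝ) + 1) * ((γ':ℝ) * Real.pi / (2 * m)) := by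
      push_cast; ring
    rw [e1, e2, Real.cos_sub, Real.cos_add]
    ring
  rw [Finset.sum_congr rfl (fun j _ => key j), ← Finset.sum_div, Finset.sum_add_distrib]
  by_cases hEq : γ = γ'
  · subst hEq
    have hz : ∀ j : ℕ, Real.cos ((2 * (j:ℝ) + 1) * ((((γ - γ : ℕ)):ℝ) * Real.pi / (2 * m))) = 1 := by
      intro j; simp
    rw [Finset.sum_congr rfl (fun j _ => hz j), Finset.sum_const, Finset.card_range]
    by_cases h0 : γ = 0
    · subst h0
      have : ∀ j : ℕ, Real.cos ((2 * (j:ℝ) + 1) * ((((0 + 0 : ℕ)):ℝ) * Real.pi / (2 * m))) = 1 := by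
        intro j; norm_num
      rw [Finset.sum_congr rfl (fun j _ => this j), Finset.sum_const, Finset.card_range]
      simp
    · have hz2 := sum_cos_zero m (γ + γ) hm (by omega) (by omega)
      rw [hz2]
      simp [if_neg h0]
  · have hlt : γ' < γ := lt_of_le_of_ne h (Ne.symm hEq)
    rw [sum_cos_zero m (γ - γ') hm (by omega) (by omega),
      sum_cos_zero m (γ + γ') hm (by omega) (by omega)]
    simp [hEq]

/-! ### The eigenvector relation for `chainA` -/

lemma row_sum (m : ℕ) (j : ℕ) (hj : j < m) (c : ℕ → ℝ) :
    ∑ k ∈ Finset.range m, entE m j k * c k =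
      (if j = 0 ∨ j = m - 1 then (1:ℝ) else 2) * c j
        - (if j + 1 < m then c (j + 1) else 0)
        - (if j = 0 then 0 else c (j - 1)) := by
  have hsplit : ∀ k, entE m j k * c k =
      (if k = j then (if j = 0 ∨ j = m - 1 then (1:ℝ) else 2) * c k else 0)
        + (if k = j + 1 then -c k else 0)
        + (if j = k + 1 then -c k else 0) := by
    intro k
    unfold entE
    split_ifs <;> first | ring1 | omega
  rw [Finset.sum_congr rfl (fun k _ => hsplit k)]
  rw [Finset.sum_add_distrib, Finset.sum_add_distrib, Finset.sum_ite_eq',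
    Finset.sum_ite_eq']
  have h3 : (∑ k ∈ Finset.range m, if j = k + 1 then -c k else 0)
      = if j = 0 then 0 else -c (j - 1) := by
    rcases Nat.eq_zero_or_pos j with h0 | h0
    · subst h0; simp
    · obtain ⟨i, rfl⟩ : ∃ i, j = i + 1 := ⟨j - 1, by omega⟩
      have : ∀ k, (if i + 1 = k + 1 then -c k else 0) = (if k = i then -c k else 0) := by
        intro k; split_ifs <;> first | rfl | omega
      rw [Finset.sum_congr rfl (fun k _ => this k), Finset.sum_ite_eq']
      simp [Finset.mem_range]
      omega
  rw [h3]
  simp only [Finset.mem_range, hj, if_true]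
  split_ifs <;> ring

lemma row_eigen (m : ℕ) (hm : 2 ≤ m) (γ : ℕ) (j : ℕ) (hj : j < m) :
    ∑ k ∈ Finset.range m, entE m j k * Real.cos ((2 * k + 1) * ((γ : ℝ) * Real.pi / (2 * m))) =
      lamE m γ * Real.cos ((2 * j + 1) * ((γ : ℝ) * Real.pi / (2 * m))) := by
  have hm0 : (m:ℝ) ≠ 0 := by positivity
  set t : ℝ := (γ : ℝ) * Real.pi / (2 * m) with ht
  set C : ℝ → ℝ := fun s => Real.cos ((2 * s + 1) * t) with hC
  have hrec : ∀ s : ℝ, C (s - 1) + C (s + 1) = 2 * Real.cos (2 * t) * C s := by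
    intro s
    have e1 : (2 * (s - 1) + 1) * t = (2 * s + 1) * t - 2 * t := by ring
    have e2 : (2 * (s + 1) + 1) * t = (2 * s + 1) * t + 2 * t := by ring
    simp only [hC, e1, e2]
    exact cos_rec _ _
  have hlam : lamE m γ = 2 - 2 * Real.cos (2 * t) := by
    unfold lamE
    rw [show (γ:ℝ) * Real.pi / m = 2 * t by rw [ht]; field_simp]
    ring
  have hCneg : C (-1) = C 0 := by
    simp only [hC]
    rw [show (2 * (-1:ℝ) + 1) * t = -(( 2 * (0:ℝ) + 1) * t) by ring, Real.cos_neg]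
  have hCm : C m = C ((m:ℝ) - 1) := by
    simp only [hC]
    rw [show (2 * (m:ℝ) + 1) * t = γ * Real.pi + t by rw [ht]; field_simp,
      show (2 * ((m:ℝ) - 1) + 1) * t = γ * Real.pi - t by rw [ht]; field_simp; ring,
      Real.cos_add, Real.cos_sub, Real.sin_nat_mul_pi]
    ring
  have hcast : ∀ k : ℕ, Real.cos ((2 * (k:ℝ) + 1) * t) = C k := fun k => rfl
  rw [row_sum m j hj (fun k => Real.cos ((2 * (k:ℝ) + 1) * t))]
  simp only [hcast]
  rw [hlam]
  by_cases hj0 : j = 0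
  · subst hj0
    have h1m : (0:ℕ) + 1 < m := by omega
    have hne : ¬ ((0:ℕ) = m - 1) := by omega
    simp only [true_or, if_true, h1m, if_pos rfl]
    have h0 := hrec 0
    rw [show (0:ℝ) - 1 = -1 by ring, show (0:ℝ) + 1 = 1 by ring, hCneg] at h0
    have : ((0:ℕ):ℝ) = 0 := by norm_num
    rw [this, show (((0:ℕ)+1 : ℕ):ℝ) = 1 by norm_num]
    linarith
  · by_cases hjm : j = m - 1
    · have hnot : ¬ (j + 1 < m) := by omega
      simp only [if_pos (Or.inr hjm), hnot, if_false, hj0, if_neg, if_false]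
      have h0 := hrec ((m:ℝ) - 1)
      rw [show (m:ℝ) - 1 + 1 = (m:ℝ) by ring, hCm] at h0
      have e1 : ((j - 1 : ℕ) : ℝ) = (m:ℝ) - 1 - 1 := by
        have : j - 1 = m - 2 := by omega
        rw [this]; push_cast [Nat.cast_sub (by omega : 2 ≤ m)]; ring
      have e2 : ((j : ℕ) : ℝ) = (m:ℝ) - 1 := by
        rw [hjm]; push_cast [Nat.cast_sub (by omega : 1 ≤ m)]; ring
      rw [e1, e2]
      linarith
    · have hd : ¬ (j = 0 ∨ j = m - 1) := by omega
      have h1m : j + 1 < m := by omega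
      simp only [hj0, hjm, false_or, or_self, if_false, h1m, if_true]
      have h0 := hrec (j : ℝ)
      have e1 : ((j - 1 : ℕ) : ℝ) = (j:ℝ) - 1 := by
        push_cast [Nat.cast_sub (by omega : 1 ≤ j)]; ring
      have e2 : ((j + 1 : ℕ) : ℝ) = (j:ℝ) + 1 := by push_cast; ring
      rw [e1, e2]
      linarith

/-! ### Matrix-level lemmas -/

lemma chainA_mul_evP (m : ℕ) (hm : 2 ≤ m) :
    chainA m * evP m = evP m * Matrix.diagonal (fun γ : Fin m => lamE m γ) := by
  ext j γ
  rw [Matrix.mul_apply, Matrix.mul_diagonal]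
  have hc : (∑ k : Fin m, chainA m j k * evP m k γ) =
      ∑ k ∈ Finset.range m, entE m (j:ℕ) k *
        Real.cos ((2 * (k:ℝ) + 1) * (((γ:ℕ):ℝ) * Real.pi / (2 * (m:ℝ)))) :=
    Fin.sum_univ_eq_sum_range (fun k : ℕ => entE m (j:ℕ) k *
      Real.cos ((2 * (k:ℝ) + 1) * (((γ:ℕ):ℝ) * Real.pi / (2 * (m:ℝ))))) m
  rw [hc, row_eigen m hm (γ:ℕ) (j:ℕ) j.2]
  rw [mul_comm]
  rfl

lemma evP_orth (m : ℕ) (hm : 2 ≤ m) :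
    (evP m)ᵀ * evP m =
      Matrix.diagonal (fun γ : Fin m => if (γ:ℕ) = 0 then (m:ℝ) else m / 2) := by
  ext γ γ'
  rw [Matrix.mul_apply, Matrix.diagonal_apply]
  have hc : (∑ j : Fin m, (evP m)ᵀ γ j * evP m j γ') =
      ∑ j ∈ Finset.range m,
        Real.cos ((2 * (j:ℝ) + 1) * (((γ:ℕ):ℝ) * Real.pi / (2 * (m:ℝ)))) *
          Real.cos ((2 * (j:ℝ) + 1) * (((γ':ℕ):ℝ) * Real.pi / (2 * (m:ℝ)))) :=
    Fin.sum_univ_eq_sum_range (fun j : ℕ =>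
      Real.cos ((2 * (j:ℝ) + 1) * (((γ:ℕ):ℝ) * Real.pi / (2 * (m:ℝ)))) *
        Real.cos ((2 * (j:ℝ) + 1) * (((γ':ℕ):ℝ) * Real.pi / (2 * (m:ℝ))))) m
  rw [hc]
  rcases le_total (γ':ℕ) (γ:ℕ) with h | h
  · rw [sum_cos_cos m (γ:ℕ) (γ':ℕ) hm γ.2 γ'.2 h]
    by_cases hEq : γ = γ'
    · subst hEq; simp
    · rw [if_neg (by simpa [Fin.ext_iff] using hEq), if_neg hEq]
  · have hswap : ∀ j : ℕ,
        Real.cos ((2 * (j:ℝ) + 1) * (((γ:ℕ):ℝ) * Real.pi / (2 * (m:ℝ)))) *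
          Real.cos ((2 * (j:ℝ) + 1) * (((γ':ℕ):ℝ) * Real.pi / (2 * (m:ℝ)))) =
        Real.cos ((2 * (j:ℝ) + 1) * (((γ':ℕ):ℝ) * Real.pi / (2 * (m:ℝ)))) *
          Real.cos ((2 * (j:ℝ) + 1) * (((γ:ℕ):ℝ) * Real.pi / (2 * (m:ℝ)))) :=
      fun j => mul_comm _ _
    rw [Finset.sum_congr rfl (fun j _ => hswap j),
      sum_cos_cos m (γ':ℕ) (γ:ℕ) hm γ'.2 γ.2 h]
    by_cases hEq : γ = γ'
    · subst hEq; simp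
    · rw [if_neg (by simpa [Fin.ext_iff, eq_comm] using hEq), if_neg hEq]

lemma det_evP_ne_zero (m : ℕ) (hm : 2 ≤ m) : (evP m).det ≠ 0 := by
  have hmp : (0:ℝ) < m := by exact_mod_cast (by omega : 0 < m)
  have h : (evP m).det * (evP m).det =
      ∏ γ : Fin m, (if (γ:ℕ) = 0 then (m:ℝ) else m / 2) := by
    rw [show (evP m).det * (evP m).det = ((evP m)ᵀ * evP m).det by
        rw [Matrix.det_mul, Matrix.det_transpose],
      evP_orth m hm, Matrix.det_diagonal]
  intro h0
  rw [h0, mul_zero] at h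
  have : (∏ γ : Fin m, (if (γ:ℕ) = 0 then (m:ℝ) else m / 2)) ≠ 0 := by
    apply Finset.prod_ne_zero_iff.mpr
    intro γ _
    split_ifs <;> positivity
  exact this h.symm

lemma det_chainA_add (n : ℕ) (hn : 2 ≤ n) (c : ℝ) :
    (chainA n + c • (1 : Matrix (Fin n) (Fin n) ℝ)).det =
      ∏ α ∈ Finset.range n, (lamE n α + c) := by
  have hd : Matrix.diagonal (fun α : Fin n => lamE n (α:ℕ) + c) =
      Matrix.diagonal (fun α : Fin n => lamE n (α:ℕ)) + c • (1 : Matrix (Fin n) (Fin n) ℝ) := by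
    ext i j
    by_cases hij : i = j <;>
      simp [Matrix.diagonal_apply, Matrix.one_apply, hij]
  have key : (chainA n + c • (1 : Matrix (Fin n) (Fin n) ℝ)) * evP n =
      evP n * Matrix.diagonal (fun α : Fin n => lamE n (α:ℕ) + c) := by
    rw [hd, Matrix.add_mul, Matrix.mul_add, chainA_mul_evP n hn, Matrix.smul_mul,
      Matrix.mul_smul, Matrix.one_mul, Matrix.mul_one]
  have hdet := congrArg Matrix.det key
  rw [Matrix.det_mul, Matrix.det_mul, Matrix.det_diagonal] at hdet
  have hprod : (∏ α : Fin n, (lamE n (α:ℕ) + c)) =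
      ∏ α ∈ Finset.range n, (lamE n α + c) :=
    Fin.prod_univ_eq_prod_range (fun α => lamE n α + c) n
  rw [hprod] at hdet
  rw [mul_comm ((evP n).det)] at hdet
  exact mul_right_cancel₀ (det_evP_ne_zero n hn) hdet

/-! ### The block matrix -/

lemma blockA_eq (m n : ℕ) :
    blockA m n = chainA m ⊗ₖ (1 : Matrix (Fin n) (Fin n) ℝ)
      + (1 : Matrix (Fin m) (Fin m) ℝ) ⊗ₖ chainA n := by
  ext ⟨i, α⟩ ⟨k, β⟩
  simp only [blockA, chainA, Matrix.add_apply, Matrix.kroneckerMap_apply, Matrix.of_apply,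
    Matrix.one_apply, Fin.ext_iff]
  split_ifs <;> first | ring1 | omega

theorem blockdet (m n : ℕ) (hm : 2 ≤ m) (hn : 2 ≤ n) (a : ℝ) :
    Matrix.det (blockA m n - a • (1 : Matrix (Fin m × Fin n) (Fin m × Fin n) ℝ)) =
      ∏ γ ∈ Finset.range m,
        Matrix.det (chainA n + (lamE m γ - a) • (1 : Matrix (Fin n) (Fin n) ℝ)) := by
  set P := evP m
  set Q : Matrix (Fin m × Fin n) (Fin m × Fin n) ℝ := P ⊗ₖ (1 : Matrix (Fin n) (Fin n) ℝ)
    with hQ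
  set D : Matrix (Fin m) (Fin m) ℝ := Matrix.diagonal (fun γ : Fin m => lamE m γ) with hD
  set R : Matrix (Fin m × Fin n) (Fin m × Fin n) ℝ :=
    D ⊗ₖ (1 : Matrix (Fin n) (Fin n) ℝ) + (1 : Matrix (Fin m) (Fin m) ℝ) ⊗ₖ chainA n
      - a • (1 : Matrix (Fin m × Fin n) (Fin m × Fin n) ℝ) with hR
  have h1 : (chainA m ⊗ₖ (1 : Matrix (Fin n) (Fin n) ℝ)) * Q =
      Q * (D ⊗ₖ (1 : Matrix (Fin n) (Fin n) ℝ)) := by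
    rw [hQ, ← Matrix.mul_kronecker_mul, ← Matrix.mul_kronecker_mul,
      chainA_mul_evP m hm]
  have h2 : ((1 : Matrix (Fin m) (Fin m) ℝ) ⊗ₖ chainA n) * Q =
      Q * ((1 : Matrix (Fin m) (Fin m) ℝ) ⊗ₖ chainA n) := by
    rw [hQ, ← Matrix.mul_kronecker_mul, ← Matrix.mul_kronecker_mul,
      Matrix.one_mul, Matrix.mul_one, Matrix.one_mul, Matrix.mul_one]
  have key : (blockA m n - a • (1 : Matrix (Fin m × Fin n) (Fin m × Fin n) ℝ)) * Q = Q * R := by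
    rw [blockA_eq m n, hR, Matrix.sub_mul, Matrix.add_mul, Matrix.mul_sub, Matrix.mul_add,
      h1, h2, Matrix.smul_mul, Matrix.mul_smul, Matrix.one_mul, Matrix.mul_one]
  have hQdet : Q.det ≠ 0 := by
    rw [hQ, Matrix.det_kronecker]
    simp only [Matrix.det_one, one_pow, mul_one, Fintype.card_fin]
    exact pow_ne_zero n (det_evP_ne_zero m hm)
  have hdet : (blockA m n - a • (1 : Matrix (Fin m × Fin n) (Fin m × Fin n) ℝ)).det * Q.det =
      Q.det * R.det := by
    rw [← Matrix.det_mul, key, Matrix.det_mul]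
  rw [mul_comm Q.det] at hdet
  have hBR := mul_right_cancel₀ hQdet hdet
  rw [hBR]
  have hRblock : R = (Matrix.blockDiagonal
      (fun γ : Fin m => chainA n + (lamE m (γ:ℕ) - a) • (1 : Matrix (Fin n) (Fin n) ℝ))).reindex
        (Equiv.prodComm (Fin n) (Fin m)) (Equiv.prodComm (Fin n) (Fin m)) := by
    ext ⟨i, α⟩ ⟨k, β⟩
    simp only [hR, hD, Matrix.sub_apply, Matrix.add_apply, Matrix.kroneckerMap_apply,
      Matrix.diagonal_apply, Matrix.one_apply, Matrix.smul_apply, Matrix.reindex_apply,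
      Matrix.submatrix_apply, Equiv.prodComm_symm, Equiv.prodComm_apply, Prod.swap_prod_mk,
      Matrix.blockDiagonal_apply, Prod.mk.injEq, smul_eq_mul]
    by_cases hik : i = k
    · subst hik
      by_cases hab : α = β <;> simp [hab] <;> ring
    · simp [hik]
  rw [hRblock, Matrix.det_reindex_self, Matrix.det_blockDiagonal]
  exact Fin.prod_univ_eq_prod_range
    (fun γ : ℕ => (chainA n + (lamE m γ - a) • (1 : Matrix (Fin n) (Fin n) ℝ)).det) m

theorem stmt9 (m n : ℕ) (hm : 2 ≤ m) (hn : 2 ≤ n) (a : ℝ) :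
    Matrix.det (blockA m n - a • (1 : Matrix (Fin m × Fin n) (Fin m × Fin n) ℝ)) =
        ∏ γ ∈ Finset.range m,
          Matrix.det (chainA n +
            (2 * (1 - Real.cos (γ * Real.pi / m)) - a) • (1 : Matrix (Fin n) (Fin n) ℝ)) ∧
      Matrix.det (blockA m n - a • (1 : Matrix (Fin m × Fin n) (Fin m × Fin n) ℝ)) =
        (-1) ^ (m * n) * ∏ γ ∈ Finset.range m, ∏ α ∈ Finset.range n,
          (a - (2 * (1 - Real.cos (γ * Real.pi / m)) +
            2 * (1 - Real.cos (α * Real.pi / n)))) := by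
  have h1 : Matrix.det (blockA m n - a • (1 : Matrix (Fin m × Fin n) (Fin m × Fin n) ℝ)) =
      ∏ γ ∈ Finset.range m,
        Matrix.det (chainA n + (lamE m γ - a) • (1 : Matrix (Fin n) (Fin n) ℝ)) :=
    blockdet m n hm hn a
  have h2 : Matrix.det (blockA m n - a • (1 : Matrix (Fin m × Fin n) (Fin m × Fin n) ℝ)) =
      (-1) ^ (m * n) * ∏ γ ∈ Finset.range m, ∏ α ∈ Finset.range n,
        (a - (lamE m γ + lamE n α)) := by
    rw [h1]
    rw [Finset.prod_congr rfl (fun γ _ => det_chainA_add n hn (lamE m γ - a))]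
    have step : ∀ γ ∈ Finset.range m,
        (∏ α ∈ Finset.range n, (lamE n α + (lamE m γ - a))) =
          (-1 : ℝ) ^ n * ∏ α ∈ Finset.range n, (a - (lamE m γ + lamE n α)) := by
      intro γ _
      rw [show ((-1 : ℝ) ^ n) = ∏ _α ∈ Finset.range n, (-1 : ℝ) by
          rw [Finset.prod_const, Finset.card_range], ← Finset.prod_mul_distrib]
      exact Finset.prod_congr rfl fun α _ => by ring
    rw [Finset.prod_congr rfl step, Finset.prod_mul_distrib, Finset.prod_const,
      Finset.card_range, ← pow_mul, Nat.mul_comm n m]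
  exact ⟨h1, h2⟩
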